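/- Let Lx, Ly > 0 and Ω = [0,Lx] × [0,Ly] ⊂ ℝ². Suppose φ : ℝ² → ℝ is continuous and periodic with periods Lx in the first variable and Ly in the second; c : ℝ × ℝ² → ℝ is continuously differentiable and spatially periodic with the same periods; wˣ, wʸ : ℝ × ℝ² → ℝ are continuously differentiable and spatially periodic with the same periods; g : ℝ × ℝ² → ℝ is continuous; and for all t ∈ [0,T] and p ∈ ℝ², φ(p)·∂ₜc(t,p) + ∂₁wˣ(t,p) + ∂₂wʸ(t,p) = g(t,p), where ∂₁, ∂₂ denote partial derivatives in the two spatial variables. Then for every t ∈ [0,T], ∫_Ω φ(p)·c(t,p) dp = ∫_Ω φ(p)·c(0,p) dp + ∫₀ᵗ ∫_Ω g(s,p) dp ds. -/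

import Mathlib

open MeasureTheory Set

/-- **Mass conservation** (Lemma 2.1).  For the transport equation
`φ ∂ₜc + ∂₁wˣ + ∂₂wʸ = g` on the rectangle `Ω = [0,Lx] × [0,Ly]` with periodic
boundary conditions, the weighted mass `∫_Ω φ c(t,·)` equals the initial mass
plus the time-integrated source. -/
theorem mass_conservation
    (Lx Ly T : ℝ) (hLx : 0 < Lx) (hLy : 0 < Ly) (hT : 0 ≤ T)
    (φ : ℝ × ℝ → ℝ) (c wx wy g : ℝ × (ℝ × ℝ) → ℝ)
    (hφcont : Continuous φ)
    (hφpx : ∀ x y : ℝ, φ (x + Lx, y) = φ (x, y))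
    (hφpy : ∀ x y : ℝ, φ (x, y + Ly) = φ (x, y))
    (hc : ContDiff ℝ 1 c)
    (hcpx : ∀ t x y : ℝ, c (t, (x + Lx, y)) = c (t, (x, y)))
    (hcpy : ∀ t x y : ℝ, c (t, (x, y + Ly)) = c (t, (x, y)))
    (hwx : ContDiff ℝ 1 wx)
    (hwxpx : ∀ t x y : ℝ, wx (t, (x + Lx, y)) = wx (t, (x, y)))
    (hwxpy : ∀ t x y : ℝ, wx (t, (x, y + Ly)) = wx (t, (x, y)))
    (hwy : ContDiff ℝ 1 wy)
    (hwypx : ∀ t x y : ℝ, wy (t, (x + Lx, y)) = wy (t, (x, y)))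
    (hwypy : ∀ t x y : ℝ, wy (t, (x, y + Ly)) = wy (t, (x, y)))
    (hgcont : Continuous g)
    (hpde : ∀ t ∈ Icc (0 : ℝ) T, ∀ p : ℝ × ℝ,
      φ p * deriv (fun s => c (s, p)) t
        + deriv (fun x => wx (t, (x, p.2))) p.1
        + deriv (fun y => wy (t, (p.1, y))) p.2 = g (t, p)) :
    ∀ t ∈ Icc (0 : ℝ) T,
      ∫ p in Icc (0 : ℝ) Lx ×ˢ Icc (0 : ℝ) Ly, φ p * c (t, p)
        = (∫ p in Icc (0 : ℝ) Lx ×ˢ Icc (0 : ℝ) Ly, φ p * c (0, p))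
          + ∫ s in (0 : ℝ)..t, ∫ p in Icc (0 : ℝ) Lx ×ˢ Icc (0 : ℝ) Ly, g (s, p) := by
  have hcd := hc.differentiable one_ne_zero
  have hwxd := hwx.differentiable one_ne_zero
  have hwyd := hwy.differentiable one_ne_zero
  set Ω : Set (ℝ × ℝ) := Icc (0 : ℝ) Lx ×ˢ Icc (0 : ℝ) Ly with hΩdef
  have hΩm : MeasurableSet Ω := measurableSet_Icc.prod measurableSet_Icc
  have hΩc : IsCompact Ω := isCompact_Icc.prod isCompact_Icc
  -- partial derivative functions
  set dc : ℝ × (ℝ × ℝ) → ℝ := fun q => fderiv ℝ c q (1, 0) with hdcdef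
  set dwx : ℝ × (ℝ × ℝ) → ℝ := fun q => fderiv ℝ wx q (0, (1, 0)) with hdwxdef
  set dwy : ℝ × (ℝ × ℝ) → ℝ := fun q => fderiv ℝ wy q (0, (0, 1)) with hdwydef
  have hdccont : Continuous dc := (hc.continuous_fderiv one_ne_zero).clm_apply continuous_const
  have hdwxcont : Continuous dwx := (hwx.continuous_fderiv one_ne_zero).clm_apply continuous_const
  have hdwycont : Continuous dwy := (hwy.continuous_fderiv one_ne_zero).clm_apply continuous_const
  have hdc : ∀ (s : ℝ) (p : ℝ × ℝ), HasDerivAt (fun τ => c (τ, p)) (dc (s, p)) s := by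
    intro s p
    have h1 : HasDerivAt (fun τ : ℝ => (τ, p)) ((1 : ℝ), (0 : ℝ × ℝ)) s :=
      (hasDerivAt_id s).prodMk (hasDerivAt_const s p)
    exact (hcd (s, p)).hasFDerivAt.comp_hasDerivAt s h1
  have hdwx : ∀ (s x y : ℝ),
      HasDerivAt (fun x' => wx (s, (x', y))) (dwx (s, (x, y))) x := by
    intro s x y
    have h1 : HasDerivAt (fun x' : ℝ => (s, (x', y)))
        ((0 : ℝ), ((1 : ℝ), (0 : ℝ))) x :=
      (hasDerivAt_const x s).prodMk ((hasDerivAt_id x).prodMk (hasDerivAt_const x y))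
    exact (hwxd (s, (x, y))).hasFDerivAt.comp_hasDerivAt x h1
  have hdwy : ∀ (s x y : ℝ),
      HasDerivAt (fun y' => wy (s, (x, y'))) (dwy (s, (x, y))) y := by
    intro s x y
    have h1 : HasDerivAt (fun y' : ℝ => (s, (x, y')))
        ((0 : ℝ), ((0 : ℝ), (1 : ℝ))) y :=
      (hasDerivAt_const y s).prodMk ((hasDerivAt_const y x).prodMk (hasDerivAt_id y))
    exact (hwyd (s, (x, y))).hasFDerivAt.comp_hasDerivAt y h1
  -- the divergence terms integrate to zero
  have hzx : ∀ s : ℝ, ∫ p in Ω, dwx (s, p) = 0 := by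
    intro s
    have hcont : Continuous fun p : ℝ × ℝ => dwx (s, p) :=
      hdwxcont.comp (continuous_const.prodMk continuous_id)
    have hint : IntegrableOn (fun p => dwx (s, p)) Ω :=
      hcont.continuousOn.integrableOn_compact hΩc
    have hint' : Integrable (Function.uncurry fun x y => dwx (s, (x, y)))
        ((volume.restrict (Icc (0:ℝ) Lx)).prod (volume.restrict (Icc (0:ℝ) Ly))) := by
      rw [Measure.prod_restrict]
      exact hint
    have h1 : (∫ p in Ω, dwx (s, p))
        = ∫ x in Icc (0:ℝ) Lx, ∫ y in Icc (0:ℝ) Ly, dwx (s, (x, y)) := by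
      rw [hΩdef, Measure.volume_eq_prod ℝ ℝ, setIntegral_prod _ ]
      · rwa [← Measure.volume_eq_prod ℝ ℝ]
    rw [h1, integral_integral_swap hint']
    have hinner : ∀ y : ℝ, (∫ x in Icc (0:ℝ) Lx, dwx (s, (x, y))) = 0 := by
      intro y
      have hc1 : Continuous fun x : ℝ => dwx (s, (x, y)) :=
        hdwxcont.comp (continuous_const.prodMk (continuous_id.prodMk continuous_const))
      have hftc := intervalIntegral.integral_eq_sub_of_hasDerivAt
        (f := fun x' => wx (s, (x', y))) (f' := fun x => dwx (s, (x, y)))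
        (fun x _ => hdwx s x y) (hc1.intervalIntegrable 0 Lx)
      rw [MeasureTheory.integral_Icc_eq_integral_Ioc,
        ← intervalIntegral.integral_of_le hLx.le, hftc]
      have := hwxpx s 0 y
      rw [zero_add] at this
      simp [this]
    simp [hinner]
  have hzy : ∀ s : ℝ, ∫ p in Ω, dwy (s, p) = 0 := by
    intro s
    have hcont : Continuous fun p : ℝ × ℝ => dwy (s, p) :=
      hdwycont.comp (continuous_const.prodMk continuous_id)
    have hint : IntegrableOn (fun p => dwy (s, p)) Ω :=
      hcont.continuousOn.integrableOn_compact hΩc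
    have h1 : (∫ p in Ω, dwy (s, p))
        = ∫ x in Icc (0:ℝ) Lx, ∫ y in Icc (0:ℝ) Ly, dwy (s, (x, y)) := by
      rw [hΩdef, Measure.volume_eq_prod ℝ ℝ, setIntegral_prod _ ]
      · rwa [← Measure.volume_eq_prod ℝ ℝ]
    rw [h1]
    have hinner : ∀ x : ℝ, (∫ y in Icc (0:ℝ) Ly, dwy (s, (x, y))) = 0 := by
      intro x
      have hc1 : Continuous fun y : ℝ => dwy (s, (x, y)) :=
        hdwycont.comp (continuous_const.prodMk (continuous_const.prodMk continuous_id))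
      have hftc := intervalIntegral.integral_eq_sub_of_hasDerivAt
        (f := fun y' => wy (s, (x, y'))) (f' := fun y => dwy (s, (x, y)))
        (fun y _ => hdwy s x y) (hc1.intervalIntegrable 0 Ly)
      rw [MeasureTheory.integral_Icc_eq_integral_Ioc,
        ← intervalIntegral.integral_of_le hLy.le, hftc]
      have := hwypy s x 0
      rw [zero_add] at this
      simp [this]
    simp [hinner]
  -- identification of the derivative integrand with the source
  have hBeq : ∀ s ∈ Icc (0:ℝ) T,
      (∫ p in Ω, φ p * dc (s, p)) = ∫ p in Ω, g (s, p) := by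
    intro s hs
    have hpt : ∀ p : ℝ × ℝ, g (s, p) = φ p * dc (s, p) + dwx (s, p) + dwy (s, p) := by
      intro p
      have h := hpde s hs p
      rw [(hdc s p).deriv, (hdwx s p.1 p.2).deriv, (hdwy s p.1 p.2).deriv] at h
      simpa using h.symm
    have hint1 : IntegrableOn (fun p => φ p * dc (s, p)) Ω :=
      ((hφcont.mul (hdccont.comp (continuous_const.prodMk
        continuous_id))).continuousOn).integrableOn_compact hΩc
    have hint2 : IntegrableOn (fun p => dwx (s, p)) Ω :=
      ((hdwxcont.comp (continuous_const.prodMk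
        continuous_id)).continuousOn).integrableOn_compact hΩc
    have hint3 : IntegrableOn (fun p => dwy (s, p)) Ω :=
      ((hdwycont.comp (continuous_const.prodMk
        continuous_id)).continuousOn).integrableOn_compact hΩc
    have h1 : (∫ p in Ω, g (s, p))
        = ∫ p in Ω, (φ p * dc (s, p) + dwx (s, p) + dwy (s, p)) := by
      exact integral_congr_ae (ae_of_all _ fun p => hpt p)
    have h2 : (∫ p in Ω, (φ p * dc (s, p) + dwx (s, p) + dwy (s, p)))
        = (∫ p in Ω, (φ p * dc (s, p) + dwx (s, p))) + ∫ p in Ω, dwy (s, p) :=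
      integral_add (hint1.add hint2) hint3
    have h3 : (∫ p in Ω, (φ p * dc (s, p) + dwx (s, p)))
        = (∫ p in Ω, φ p * dc (s, p)) + ∫ p in Ω, dwx (s, p) :=
      integral_add hint1 hint2
    rw [h1, h2, h3, hzx s, hzy s]
    ring
  -- differentiation under the integral sign
  have hFder : ∀ s : ℝ,
      HasDerivAt (fun τ => ∫ p in Ω, φ p * c (τ, p)) (∫ p in Ω, φ p * dc (s, p)) s := by
    intro s
    have hKcomp : IsCompact (Icc (s - 1) (s + 1) ×ˢ Ω) := isCompact_Icc.prod hΩc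
    obtain ⟨M, hM⟩ := hKcomp.exists_bound_of_continuousOn
      (f := fun q : ℝ × (ℝ × ℝ) => φ q.2 * dc q)
      (((hφcont.comp continuous_snd).mul hdccont).continuousOn)
    have hbnd : ∀ᵐ p ∂(volume.restrict Ω), ∀ τ ∈ Metric.ball s 1,
        ‖φ p * dc (τ, p)‖ ≤ (fun _ : ℝ × ℝ => M) p := by
      refine (ae_restrict_iff' hΩm).2 (ae_of_all _ fun p hp τ hτ => ?_)
      refine hM (τ, p) ⟨?_, hp⟩
      rw [Real.ball_eq_Ioo] at hτ
      exact Ioo_subset_Icc_self hτ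
    have key := hasDerivAt_integral_of_dominated_loc_of_deriv_le
      (μ := volume.restrict Ω)
      (F := fun τ p => φ p * c (τ, p)) (F' := fun τ p => φ p * dc (τ, p))
      (x₀ := s) (bound := fun _ => M) (s := Metric.ball s 1) (Metric.ball_mem_nhds s one_pos)
      (Filter.Eventually.of_forall fun τ =>
        ((hφcont.mul (hc.continuous.comp (continuous_const.prodMk
          continuous_id))).aestronglyMeasurable))
      (((hφcont.mul (hc.continuous.comp (continuous_const.prodMk
        continuous_id))).continuousOn).integrableOn_compact hΩc)
      ((hφcont.mul (hdccont.comp (continuous_const.prodMk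
        continuous_id))).aestronglyMeasurable)
      hbnd
      ((integrableOn_const_iff).2 (Or.inr hΩc.measure_lt_top))
      (ae_of_all _ fun p τ _ => (hdc τ p).const_mul (φ p))
    exact key.2
  -- continuity of the source integral
  have hGcont : Continuous fun s : ℝ => ∫ p in Ω, g (s, p) := by
    rw [continuous_iff_continuousAt]
    intro s
    have hKcomp : IsCompact (Icc (s - 1) (s + 1) ×ˢ Ω) := isCompact_Icc.prod hΩc
    obtain ⟨M, hM⟩ := hKcomp.exists_bound_of_continuousOn hgcont.continuousOn
    refine continuousAt_of_dominated (bound := fun _ : ℝ × ℝ => M)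
      (Filter.Eventually.of_forall fun τ =>
        (hgcont.comp (continuous_const.prodMk continuous_id)).aestronglyMeasurable)
      ?_ ((integrableOn_const_iff).2 (Or.inr hΩc.measure_lt_top))
      (ae_of_all _ fun p =>
        (hgcont.comp (continuous_id.prodMk continuous_const)).continuousAt)
    filter_upwards [Metric.ball_mem_nhds s one_pos] with τ hτ
    refine (ae_restrict_iff' hΩm).2 (ae_of_all _ fun p hp => ?_)
    refine hM (τ, p) ⟨?_, hp⟩
    rw [Real.ball_eq_Ioo] at hτ
    exact Ioo_subset_Icc_self hτ
  -- fundamental theorem of calculus in time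
  intro t ht
  have key := intervalIntegral.integral_eq_sub_of_hasDerivAt
    (f := fun τ => ∫ p in Ω, φ p * c (τ, p))
    (f' := fun s => ∫ p in Ω, g (s, p))
    (fun s hs => by
      rw [uIcc_of_le ht.1] at hs
      have hsT : s ∈ Icc (0:ℝ) T := ⟨hs.1, hs.2.trans ht.2⟩
      have h := hFder s
      rwa [hBeq s hsT] at h)
    (hGcont.intervalIntegrable 0 t)
  linarith [key]
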